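/- Let u : [0,T] × ℝⁿ → ℝ be continuous, and let 0 < t₁ < T. Suppose the restriction of u to [0,t₁] × ℝⁿ is a viscosity solution of u_t + H(t,x,D_x u) = 0 with u(0,·) = σ₁ on (0,t₁) × ℝⁿ, and the restriction of u to [t₁,T] × ℝⁿ is a viscosity solution of the same equation with initial data u(t₁,·) on (t₁,T) × ℝⁿ. Then u is a viscosity solution of u_t + H(t,x,D_x u) = 0 with u(0,·) = σ₁ on the whole domain (0,T) × ℝⁿ. -/

import Mathlib

open scoped RealInnerProductSpace

noncomputable def timeDeriv {n : ℕ} (v : ℝ × EuclideanSpace ℝ (Fin n) → ℝ)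
    (t₀ : ℝ) (x₀ : EuclideanSpace ℝ (Fin n)) : ℝ :=
  deriv (fun t => v (t, x₀)) t₀

noncomputable def spaceGrad {n : ℕ} (v : ℝ × EuclideanSpace ℝ (Fin n) → ℝ)
    (t₀ : ℝ) (x₀ : EuclideanSpace ℝ (Fin n)) : EuclideanSpace ℝ (Fin n) :=
  gradient (fun x => v (t₀, x)) x₀

/-- `u` is a viscosity solution of `u_t + H(t,x,D_x u) = 0`, `u(a,·) = σ`, on `(a,b) × ℝⁿ`. -/
def IsViscositySolution {n : ℕ} (a b : ℝ)
    (H : ℝ → EuclideanSpace ℝ (Fin n) → EuclideanSpace ℝ (Fin n) → ℝ)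
    (σ : EuclideanSpace ℝ (Fin n) → ℝ)
    (u : ℝ → EuclideanSpace ℝ (Fin n) → ℝ) : Prop :=
  ContinuousOn (fun p : ℝ × EuclideanSpace ℝ (Fin n) => u p.1 p.2)
      (Set.Icc a b ×ˢ Set.univ) ∧
  (∀ x, u a x = σ x) ∧
  ∀ v : ℝ × EuclideanSpace ℝ (Fin n) → ℝ, ContDiff ℝ 1 v →
    ∀ t₀ ∈ Set.Ioo a b, ∀ x₀,
      (IsLocalMax (fun p : ℝ × EuclideanSpace ℝ (Fin n) => u p.1 p.2 - v p) (t₀, x₀) →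
        timeDeriv v t₀ x₀ + H t₀ x₀ (spaceGrad v t₀ x₀) ≤ 0) ∧
      (IsLocalMin (fun p : ℝ × EuclideanSpace ℝ (Fin n) => u p.1 p.2 - v p) (t₀, x₀) →
        0 ≤ timeDeriv v t₀ x₀ + H t₀ x₀ (spaceGrad v t₀ x₀))

section Helpers

open Set InnerProductSpace

variable {n : ℕ}

local notation "E" => EuclideanSpace ℝ (Fin n)

lemma hasDerivAt_time {v : ℝ × E → ℝ} (hv : ContDiff ℝ 1 v) (t : ℝ) (x : E) :
    HasDerivAt (fun s => v (s, x)) (fderiv ℝ v (t, x) (1, 0)) t := by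
  have h1 : HasDerivAt (fun s : ℝ => (s, x)) ((1 : ℝ), (0 : E)) t :=
    (hasDerivAt_id t).prodMk (hasDerivAt_const t x)
  exact ((hv.differentiable one_ne_zero (t, x)).hasFDerivAt).comp_hasDerivAt t h1

lemma timeDeriv_eq {v : ℝ × E → ℝ} (hv : ContDiff ℝ 1 v) (t : ℝ) (x : E) :
    timeDeriv v t x = fderiv ℝ v (t, x) (1, 0) :=
  (hasDerivAt_time hv t x).deriv

lemma continuous_timeDeriv {v : ℝ × E → ℝ} (hv : ContDiff ℝ 1 v) :
    Continuous fun p : ℝ × E => timeDeriv v p.1 p.2 := by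
  have : (fun p : ℝ × E => timeDeriv v p.1 p.2) = fun p => fderiv ℝ v p (1, 0) := by
    funext p
    rw [timeDeriv_eq hv p.1 p.2]
  rw [this]
  exact (hv.continuous_fderiv one_ne_zero).clm_apply continuous_const

noncomputable def Jmap (n : ℕ) : EuclideanSpace ℝ (Fin n) →L[ℝ] ℝ × EuclideanSpace ℝ (Fin n) :=
  (0 : EuclideanSpace ℝ (Fin n) →L[ℝ] ℝ).prod (ContinuousLinearMap.id ℝ _)

lemma hasFDerivAt_space {v : ℝ × E → ℝ} (hv : ContDiff ℝ 1 v) (t : ℝ) (x : E) :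
    HasFDerivAt (fun y => v (t, y)) ((fderiv ℝ v (t, x)).comp (Jmap n)) x := by
  have h1 : HasFDerivAt (fun y : E => ((t : ℝ), y)) (Jmap n) x :=
    (hasFDerivAt_const t x).prodMk (hasFDerivAt_id x)
  exact ((hv.differentiable one_ne_zero (t, x)).hasFDerivAt).comp x h1

lemma hasGradientAt_space {v : ℝ × E → ℝ} (hv : ContDiff ℝ 1 v) (t : ℝ) (x : E) :
    HasGradientAt (fun y => v (t, y)) (spaceGrad v t x) x :=
  (hasFDerivAt_space hv t x).differentiableAt.hasGradientAt

lemma spaceGrad_eq {v : ℝ × E → ℝ} (hv : ContDiff ℝ 1 v) (t : ℝ) (x : E) :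
    spaceGrad v t x = (toDual ℝ E).symm ((fderiv ℝ v (t, x)).comp (Jmap n)) := by
  rw [spaceGrad, gradient, (hasFDerivAt_space hv t x).fderiv]

lemma continuous_spaceGrad {v : ℝ × E → ℝ} (hv : ContDiff ℝ 1 v) :
    Continuous fun p : ℝ × E => spaceGrad v p.1 p.2 := by
  have : (fun p : ℝ × E => spaceGrad v p.1 p.2)
      = fun p => (toDual ℝ E).symm ((fderiv ℝ v p).comp (Jmap n)) := by
    funext p
    rw [spaceGrad_eq hv p.1 p.2]
  rw [this]
  exact (toDual ℝ E).symm.continuous.comp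
    ((hv.continuous_fderiv one_ne_zero).clm_comp continuous_const)

lemma HasGradientAt.add'' {f g : E → ℝ} {f' g' x : E}
    (hf : HasGradientAt f f' x) (hg : HasGradientAt g g' x) :
    HasGradientAt (fun y => f y + g y) (f' + g') x := by
  rw [hasGradientAt_iff_hasFDerivAt] at hf hg ⊢
  rw [map_add]
  exact hf.add hg

lemma HasGradientAt.add_const'' {f : E → ℝ} {f' x : E} (c : ℝ)
    (hf : HasGradientAt f f' x) :
    HasGradientAt (fun y => f y + c) f' x := by
  rw [hasGradientAt_iff_hasFDerivAt] at hf ⊢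
  exact hf.add_const c

lemma hasGradientAt_inner_sub (x₀ x : E) :
    HasGradientAt (fun y : E => ⟪y - x₀, y - x₀⟫) ((2 : ℝ) • (x - x₀)) x := by
  rw [hasGradientAt_iff_hasFDerivAt]
  have h : HasFDerivAt (fun y : E => y - x₀) (ContinuousLinearMap.id ℝ E) x :=
    (hasFDerivAt_id x).sub_const x₀
  have h2 := h.inner ℝ h
  refine h2.congr_fderiv ?_
  ext w
  simp only [toDual_apply_apply, fderivInnerCLM_apply, ContinuousLinearMap.coe_comp',
    Function.comp_apply, ContinuousLinearMap.prod_apply, ContinuousLinearMap.coe_id', id_eq,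
    real_inner_smul_left]
  rw [real_inner_comm (x - x₀) w]
  ring

lemma timeDeriv_neg (v : ℝ × E → ℝ) (t : ℝ) (x : E) :
    timeDeriv (fun p => -v p) t x = -timeDeriv v t x := by
  simp only [timeDeriv]
  exact deriv.neg

lemma spaceGrad_neg (v : ℝ × E → ℝ) (t : ℝ) (x : E) :
    spaceGrad (fun p => -v p) t x = -spaceGrad v t x := by
  simp only [spaceGrad, gradient]
  rw [fderiv_fun_neg, map_neg]

lemma timeDeriv_special {v : ℝ × E → ℝ} (hv : ContDiff ℝ 1 v) (P P' : ℝ → ℝ)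
    (hP : ∀ s, HasDerivAt P (P' s) s) (G : E → ℝ) (t : ℝ) (x : E) :
    timeDeriv (fun p : ℝ × E => v p + P p.1 + G p.2) t x = timeDeriv v t x + P' t := by
  have h := ((hasDerivAt_time hv t x).add (hP t)).add_const (G x)
  show deriv (fun s => v (s, x) + P s + G x) t = _
  rw [timeDeriv_eq hv t x]
  exact h.deriv

lemma spaceGrad_special {v : ℝ × E → ℝ} (hv : ContDiff ℝ 1 v) (P : ℝ → ℝ)
    {G : E → ℝ} {x : E} {G' : E} (t : ℝ) (hG : HasGradientAt G G' x) :
    spaceGrad (fun p : ℝ × E => v p + P p.1 + G p.2) t x = spaceGrad v t x + G' := by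
  have h := (((hasGradientAt_space hv t x).add_const'' (P t)).add'' hG)
  exact h.gradient

end Helpers
section Key

open Set InnerProductSpace

variable {n : ℕ}

local notation "E" => EuclideanSpace ℝ (Fin n)

set_option maxHeartbeats 1000000 in
lemma keyMax {a b : ℝ} (hab : a < b)
    {H : ℝ → E → E → ℝ}
    (hH : Continuous fun p : ℝ × E × E => H p.1 p.2.1 p.2.2)
    {u : ℝ → E → ℝ}
    (hu : ContinuousOn (fun p : ℝ × E => u p.1 p.2) (Set.Icc a b ×ˢ Set.univ))
    (hvisc : ∀ w : ℝ × E → ℝ, ContDiff ℝ 1 w → ∀ t₀ ∈ Set.Ioo a b, ∀ y₀,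
        IsLocalMax (fun p : ℝ × E => u p.1 p.2 - w p) (t₀, y₀) →
        timeDeriv w t₀ y₀ + H t₀ y₀ (spaceGrad w t₀ y₀) ≤ 0)
    {v : ℝ × E → ℝ} (hv : ContDiff ℝ 1 v) (x₀ : E)
    (hmax : IsLocalMax (fun p : ℝ × E => u p.1 p.2 - v p) (b, x₀)) :
    timeDeriv v b x₀ + H b x₀ (spaceGrad v b x₀) ≤ 0 := by
  by_contra hcon
  push_neg at hcon
  -- the perturbed "equation value" function, continuous and positive near (b, x₀)
  set Gfun : ℝ × E → ℝ := fun p =>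
    timeDeriv v p.1 p.2 + 2 * (p.1 - b) +
      H p.1 p.2 (spaceGrad v p.1 p.2 + (2 : ℝ) • (p.2 - x₀)) with hGfun_def
  have hGcont : Continuous Gfun := by
    apply Continuous.add
    · exact (continuous_timeDeriv hv).add
        (continuous_const.mul (continuous_fst.sub continuous_const))
    · exact hH.comp (continuous_fst.prodMk (continuous_snd.prodMk
        ((continuous_spaceGrad hv).add
          ((continuous_const (y := (2:ℝ))).smul (continuous_snd.sub continuous_const)))))
  clear_value Gfun
  have hGpos : 0 < Gfun (b, x₀) := by
    simpa [hGfun_def] using hcon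
  have hev : ∀ᶠ p in nhds ((b, x₀) : ℝ × E), 0 < Gfun p :=
    (hGcont.continuousAt (x := ((b, x₀) : ℝ × E))).eventually (eventually_gt_nhds hGpos)
  rw [Metric.eventually_nhds_iff] at hev
  obtain ⟨ρ, hρ, hball⟩ := hev
  obtain ⟨ρ₂, hρ₂, hloc⟩ := Metric.eventually_nhds_iff.mp hmax
  -- choice of δ
  set δ : ℝ := min ((b - a) / 2) (min (ρ / 2) (ρ₂ / 2)) with hδ_def
  have hδ : 0 < δ := by
    apply lt_min (by linarith) (lt_min (by linarith) (by linarith))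
  have hδab : a < b - δ := by
    have : δ ≤ (b - a) / 2 := min_le_left _ _
    linarith
  have hδρ : δ < ρ := by
    have : δ ≤ ρ / 2 := le_trans (min_le_right _ _) (min_le_left _ _)
    linarith
  have hδρ₂ : δ < ρ₂ := by
    have : δ ≤ ρ₂ / 2 := le_trans (min_le_right _ _) (min_le_right _ _)
    linarith
  clear_value δ
  -- the strictified function
  set ft : ℝ × E → ℝ := fun p =>
    u p.1 p.2 - v p - (p.1 - b) ^ 2 - ⟪p.2 - x₀, p.2 - x₀⟫ with hft_def
  clear_value ft
  set M : ℝ := u b x₀ - v (b, x₀) with hM_def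
  clear_value M
  have hdistle : ∀ p : ℝ × E, |p.1 - b| ≤ δ → dist p.2 x₀ ≤ δ → dist p ((b, x₀) : ℝ × E) ≤ δ := by
    intro p h1 h2
    rw [Prod.dist_eq]
    exact max_le (by rwa [Real.dist_eq]) h2
  have huvle : ∀ p : ℝ × E, |p.1 - b| ≤ δ → dist p.2 x₀ ≤ δ →
      u p.1 p.2 - v p ≤ M := by
    intro p h1 h2
    have := hloc (lt_of_le_of_lt (hdistle p h1 h2) hδρ₂)
    simpa [hM_def] using this
  have hfM : ∀ p : ℝ × E, |p.1 - b| ≤ δ → dist p.2 x₀ ≤ δ → ft p ≤ M := by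
    intro p h1 h2
    have h3 := huvle p h1 h2
    have hpen1 : (0:ℝ) ≤ (p.1 - b) ^ 2 := sq_nonneg _
    have hpen2 : (0:ℝ) ≤ ⟪p.2 - x₀, p.2 - x₀⟫ := real_inner_self_nonneg
    simp only [hft_def]
    linarith
  -- pick s close to b with u - v close to M
  have hgc : ContinuousWithinAt (fun t => u t x₀ - v (t, x₀)) (Icc a b) b := by
    have h1 : ContinuousOn (fun t : ℝ => u t x₀) (Icc a b) := by
      have := ContinuousOn.comp (g := fun p : ℝ × E => u p.1 p.2) hu
        (f := fun t : ℝ => ((t, x₀) : ℝ × E))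
        ((continuous_id.prodMk continuous_const).continuousOn)
        (fun t ht => ⟨ht, mem_univ _⟩)
      exact this
    exact (h1 b ⟨hab.le, le_rfl⟩).sub
      ((hv.continuous.comp (continuous_id.prodMk continuous_const)).continuousWithinAt)
  rw [Metric.continuousWithinAt_iff] at hgc
  obtain ⟨δ', hδ', hδ'prop⟩ := hgc (δ ^ 2 / 8) (by positivity)
  set m : ℝ := min (δ / 2) (δ' / 2) with hm_def
  have hm : 0 < m := lt_min (by linarith) (by linarith)
  have hmδ : m ≤ δ / 2 := min_le_left _ _
  have hmδ' : m ≤ δ' / 2 := min_le_right _ _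
  clear_value m
  set s : ℝ := b - m with hs_def
  clear_value s
  have hsb : s < b := by simp only [hs_def]; linarith
  have hsδ : b - δ < s := by simp only [hs_def]; linarith
  have hsa : a < s := lt_trans hδab hsδ
  have hsIcc : s ∈ Icc a b := ⟨hsa.le, hsb.le⟩
  have hsdist : dist s b < δ' := by
    rw [Real.dist_eq]
    simp only [hs_def]
    rw [abs_of_nonpos (by linarith)]
    linarith
  have hgs : M - δ ^ 2 / 8 < u s x₀ - v (s, x₀) := by
    have := hδ'prop hsIcc hsdist
    rw [Real.dist_eq, ← hM_def] at this
    have := abs_lt.mp this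
    linarith [this.1]
  have hfs : M - 3 * δ ^ 2 / 8 < ft (s, x₀) := by
    have h1 : (s - b) ^ 2 ≤ δ ^ 2 / 4 := by
      have : s - b = -m := by simp [hs_def]
      rw [this, neg_pow]
      have h2 : m ^ 2 ≤ (δ / 2) ^ 2 := pow_le_pow_left₀ hm.le hmδ 2
      have h3 : (-1 : ℝ) ^ 2 = 1 := by norm_num
      rw [h3, one_mul]
      nlinarith [h2]
    have h2 : ⟪(x₀ : E) - x₀, x₀ - x₀⟫ = (0:ℝ) := by simp
    simp only [hft_def, h2]
    linarith
  -- the barrier parameter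
  set ε : ℝ := (b - s) * (δ ^ 2 / 8) with hε_def
  have hε : 0 < ε := by
    apply mul_pos (by linarith) (by positivity)
  clear_value ε
  set V : ℝ := ft (s, x₀) - δ ^ 2 / 8 with hV_def
  clear_value V
  have hV1 : M - δ ^ 2 / 2 < V := by simp only [hV_def]; linarith
  have hsabs : |s - b| ≤ δ := by
    rw [show s - b = -m by simp [hs_def], abs_neg, abs_of_pos hm]
    linarith
  have hVM : V ≤ M := by
    have h1 := hfM (s, x₀) hsabs (by simp [hδ.le])
    have h2 : (0:ℝ) ≤ δ ^ 2 := sq_nonneg δ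
    simp only [hV_def]
    linarith
  set r : ℝ := min ((b - s) / 2) (ε / (M - V + 1)) with hr_def
  have hMV1 : 0 < M - V + 1 := by linarith
  have hr : 0 < r := lt_min (by linarith) (div_pos hε hMV1)
  have hrs : s ≤ b - r := by
    have : r ≤ (b - s) / 2 := min_le_left _ _
    linarith
  have hεr : M - V + 1 ≤ ε / r := by
    have h1 : r ≤ ε / (M - V + 1) := min_le_right _ _
    rw [le_div_iff₀ hr]
    calc (M - V + 1) * r ≤ (M - V + 1) * (ε / (M - V + 1)) := by
          apply mul_le_mul_of_nonneg_left h1 hMV1.le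
      _ = ε := by field_simp
  clear_value r
  -- maximize the barrier-penalized function on the compact slab
  set ht : ℝ × E → ℝ := fun p => ft p - ε / (b - p.1) with hht_def
  clear_value ht
  set Kr : Set (ℝ × E) := Icc (b - δ) (b - r) ×ˢ Metric.closedBall x₀ δ with hKr_def
  have hsKr : ((s, x₀) : ℝ × E) ∈ Kr := ⟨⟨hsδ.le, hrs⟩, by simp [hδ.le]⟩
  have hKrcomp : IsCompact Kr := isCompact_Icc.prod (isCompact_closedBall _ _)
  have hKrsub : Kr ⊆ Icc a b ×ˢ (univ : Set E) := by
    rintro p ⟨hp1, _⟩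
    exact ⟨⟨by linarith [hp1.1], by linarith [hp1.2, hr]⟩, mem_univ _⟩
  have hftcont : ContinuousOn ft Kr := by
    rw [hft_def]
    have h1 : ContinuousOn (fun p : ℝ × E => u p.1 p.2) Kr := hu.mono hKrsub
    have h2 : Continuous (fun p : ℝ × E => (p.1 - b) ^ 2) :=
      (continuous_fst.sub continuous_const).pow 2
    have h3 : Continuous (fun p : ℝ × E => (⟪p.2 - x₀, p.2 - x₀⟫ : ℝ)) :=
      Continuous.inner (continuous_snd.sub continuous_const)
        (continuous_snd.sub continuous_const)
    exact ((h1.sub hv.continuous.continuousOn).sub h2.continuousOn).sub h3.continuousOn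
  have hhtcont : ContinuousOn ht Kr := by
    rw [hht_def]
    apply hftcont.sub
    apply ContinuousOn.div continuousOn_const
      ((continuous_const.sub continuous_fst).continuousOn)
    rintro p ⟨hp1, _⟩
    have hple : p.1 ≤ b - r := hp1.2
    intro h0
    have hbp0 : b - p.1 = 0 := h0
    linarith
  obtain ⟨pε, hpεK, hpεmax⟩ := hKrcomp.exists_isMaxOn ⟨(s, x₀), hsKr⟩ hhtcont
  obtain ⟨t', x'⟩ := pε
  obtain ⟨ht'I, hx'B⟩ := hpεK
  simp only [mem_Icc] at ht'I
  have hx'd : dist x' x₀ ≤ δ := Metric.mem_closedBall.mp hx'B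
  have hbt' : r ≤ b - t' := by linarith [ht'I.2]
  have hbt'pos : 0 < b - t' := lt_of_lt_of_le hr hbt'
  -- value bound from below
  have hhts : ht (s, x₀) = V := by
    have hbs : b - s ≠ 0 := by intro h; simp only [hs_def] at h; linarith
    simp only [hht_def, hV_def, hε_def]
    rw [mul_div_assoc]  -- dummy
    field_simp
  have hVpε : V ≤ ht (t', x') := by
    rw [← hhts]
    exact hpεmax hsKr
  -- interiority
  have hpenlt : (t' - b) ^ 2 + ⟪x' - x₀, x' - x₀⟫ < δ ^ 2 := by
    have h1 : |t' - b| ≤ δ := by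
      rw [abs_of_nonpos (by linarith [ht'I.2, hr])]
      linarith [ht'I.1]
    have h2 := huvle (t', x') h1 hx'd
    have h3 : 0 < ε / (b - t') := div_pos hε hbt'pos
    have h4 : ht (t', x') = (u t' x' - v (t', x')) - (t' - b) ^ 2 - ⟪x' - x₀, x' - x₀⟫
        - ε / (b - t') := by simp [hht_def, hft_def]
    have hδsq : 0 < δ ^ 2 := by positivity
    linarith [hVpε, hV1]
  have hinner_nonneg : (0:ℝ) ≤ ⟪x' - x₀, x' - x₀⟫ := real_inner_self_nonneg
  have ht'gt : b - δ < t' := by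
    by_contra hcon2
    push_neg at hcon2
    have h5 : δ ≤ b - t' := by linarith
    have h6 : δ ^ 2 ≤ (b - t') ^ 2 := pow_le_pow_left₀ hδ.le h5 2
    have h7 : (b - t') ^ 2 = (t' - b) ^ 2 := by ring
    linarith
  have hx'lt : dist x' x₀ < δ := by
    have h1 : ⟪x' - x₀, x' - x₀⟫ = ‖x' - x₀‖ ^ 2 := real_inner_self_eq_norm_sq _
    have h2 : ‖x' - x₀‖ ^ 2 < δ ^ 2 := by
      rw [← h1]
      have := sq_nonneg (t' - b)
      linarith
    rw [dist_eq_norm]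
    exact lt_of_pow_lt_pow_left₀ 2 hδ.le h2
  -- test function
  set c₀ : ℝ := ε / (b - t') with hc₀_def
  set c₁ : ℝ := ε / (b - t') ^ 2 with hc₁_def
  set A : ℝ := 2 * ε / r ^ 3 with hA_def
  have hc₁pos : 0 < c₁ := div_pos hε (by positivity)
  clear_value c₀ c₁ A
  have hApos : 0 < A := by rw [hA_def]; positivity
  set P : ℝ → ℝ := fun t => (t - b) ^ 2 + (c₀ + c₁ * (t - t') + A * (t - t') ^ 2) with hP_def
  set P' : ℝ → ℝ := fun t => 2 * (t - b) + (c₁ + 2 * A * (t - t')) with hP'_def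
  clear_value P P'
  have hP : ∀ s, HasDerivAt P (P' s) s := by
    intro σ
    rw [hP_def, hP'_def]
    simp only
    have h1 : HasDerivAt (fun t : ℝ => (t - b) ^ 2) (2 * (σ - b)) σ := by
      simpa using ((hasDerivAt_id σ).sub_const b).fun_pow 2
    have h2 : HasDerivAt (fun t : ℝ => c₀ + c₁ * (t - t') + A * (t - t') ^ 2)
        (c₁ + 2 * A * (σ - t')) σ := by
      have h3 : HasDerivAt (fun t : ℝ => c₁ * (t - t')) c₁ σ := by
        simpa using ((hasDerivAt_id σ).sub_const t').const_mul c₁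
      have h4 : HasDerivAt (fun t : ℝ => A * (t - t') ^ 2) (A * (2 * (σ - t'))) σ := by
        simpa using (((hasDerivAt_id σ).sub_const t').fun_pow 2).const_mul A
      have := (h3.const_add c₀).add h4
      have e : c₁ + 2 * A * (σ - t') = c₁ + A * (2 * (σ - t')) := by ring
      rw [e]
      exact this
    exact h1.add h2
  set G : E → ℝ := fun y => ⟪y - x₀, y - x₀⟫ with hG_def
  clear_value G
  set w : ℝ × E → ℝ := fun p => v p + P p.1 + G p.2 with hw_def
  clear_value w
  have hwC : ContDiff ℝ 1 w := by
    rw [hw_def]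
    have hPc : ContDiff ℝ 1 P := by
      rw [hP_def]; fun_prop
    have hGc : ContDiff ℝ 1 G := by
      rw [hG_def]
      exact ContDiff.inner ℝ (contDiff_id.sub contDiff_const) (contDiff_id.sub contDiff_const)
    exact (hv.add (hPc.comp contDiff_fst)).add (hGc.comp contDiff_snd)
  -- local max of u - w at (t', x')
  have hUmax : ∀ p : ℝ × E, p ∈ Ioo (b - δ) (b - r / 2) ×ˢ Metric.ball x₀ δ →
      u p.1 p.2 - w p ≤ u t' x' - w (t', x') := by
    rintro p ⟨hp1, hp2⟩
    simp only [mem_Ioo] at hp1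
    have hpball : dist p.2 x₀ < δ := Metric.mem_ball.mp hp2
    have hbp : r / 2 < b - p.1 := by linarith [hp1.2]
    have hbppos : 0 < b - p.1 := by linarith
    -- step 1 : barrier below the quadratic
    have hQ : ε / (b - p.1) ≤ c₀ + c₁ * (p.1 - t') + A * (p.1 - t') ^ 2 := by
      have hiden : ε / (b - p.1) = c₀ + c₁ * (p.1 - t')
          + ε * (p.1 - t') ^ 2 / ((b - p.1) * (b - t') ^ 2) := by
        simp only [hc₀_def, hc₁_def]
        field_simp
        ring
      rw [hiden]
      have hbound : ε * (p.1 - t') ^ 2 / ((b - p.1) * (b - t') ^ 2)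
          ≤ A * (p.1 - t') ^ 2 := by
        rw [div_le_iff₀ (by positivity)]
        have hr3 : r / 2 * r ^ 2 ≤ (b - p.1) * (b - t') ^ 2 := by
          apply mul_le_mul hbp.le (pow_le_pow_left₀ hr.le hbt' 2) (by positivity) hbppos.le
        have hA' : ε = A * (r / 2 * r ^ 2) := by
          rw [hA_def]
          field_simp
        have h8 : ε ≤ A * ((b - p.1) * (b - t') ^ 2) := by
          rw [hA']
          exact mul_le_mul_of_nonneg_left hr3 hApos.le
        calc ε * (p.1 - t') ^ 2
            ≤ (A * ((b - p.1) * (b - t') ^ 2)) * (p.1 - t') ^ 2 :=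
              mul_le_mul_of_nonneg_right h8 (sq_nonneg _)
          _ = A * (p.1 - t') ^ 2 * ((b - p.1) * (b - t') ^ 2) := by ring
      linarith
    -- step 2: compare with ht
    have hstep2 : u p.1 p.2 - w p ≤ ht p := by
      simp only [hw_def, hht_def, hft_def, hP_def, hG_def]
      have : ε / (b - p.1) ≤ c₀ + c₁ * (p.1 - t') + A * (p.1 - t') ^ 2 := hQ
      linarith
    -- step 3: ht p ≤ ht (t', x')
    have hstep3 : ht p ≤ ht (t', x') := by
      by_cases hcase : p.1 ≤ b - r
      · exact hpεmax ⟨⟨hp1.1.le, hcase⟩, Metric.mem_closedBall.mpr hpball.le⟩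
      · push_neg at hcase
        have hblt : b - p.1 < r := by linarith
        have hdiv : ε / r < ε / (b - p.1) := div_lt_div_of_pos_left hε hbppos hblt
        have hfp : ft p ≤ M := hfM p (by
            rw [abs_of_nonpos (by linarith [hp1.2, hr])]
            linarith [hp1.1]) hpball.le
        have : ht p < V - 1 := by
          simp only [hht_def]
          have := hεr
          linarith
        linarith
    -- step 4: ht (t', x') = u t' x' - w (t', x')
    have hstep4 : ht (t', x') = u t' x' - w (t', x') := by
      simp only [hht_def, hft_def, hw_def, hP_def, hG_def, hc₀_def]
      ring
    linarith
  have hlocmax : IsLocalMax (fun p : ℝ × E => u p.1 p.2 - w p) (t', x') := by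
    apply Filter.eventually_of_mem
      (IsOpen.mem_nhds (isOpen_Ioo.prod Metric.isOpen_ball)
        (⟨⟨ht'gt, by linarith [ht'I.2, hr]⟩, Metric.mem_ball.mpr hx'lt⟩ :
          ((t', x') : ℝ × E) ∈ Ioo (b - δ) (b - r / 2) ×ˢ Metric.ball x₀ δ))
    exact hUmax
  -- apply the viscosity property
  have ht'ab : t' ∈ Ioo a b := ⟨lt_trans hδab ht'gt, by linarith [ht'I.2, hr]⟩
  have happ := hvisc w hwC t' ht'ab x' hlocmax
  -- compute derivatives of w
  have htd : timeDeriv w t' x' = timeDeriv v t' x' + (2 * (t' - b) + c₁) := by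
    have h0 := timeDeriv_special hv P P' hP G t' x'
    rw [hw_def, h0, hP'_def]
    simp only
    ring
  have hsg : spaceGrad w t' x' = spaceGrad v t' x' + (2 : ℝ) • (x' - x₀) := by
    rw [hw_def]
    refine spaceGrad_special hv P t' ?_
    rw [hG_def]
    exact hasGradientAt_inner_sub x₀ x'
  rw [htd, hsg] at happ
  -- contradiction with positivity
  have hdpε : dist ((t', x') : ℝ × E) ((b, x₀) : ℝ × E) < ρ := by
    apply lt_of_le_of_lt (hdistle (t', x') (by
      rw [abs_of_nonpos (by linarith [ht'I.2, hr])]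
      linarith [ht'I.1]) hx'd) hδρ
  have hGpε := hball hdpε
  simp only [hGfun_def] at hGpε
  linarith
end Key

section Key2

open Set InnerProductSpace

variable {n : ℕ}

local notation "E" => EuclideanSpace ℝ (Fin n)

lemma keyMin {a b : ℝ} (hab : a < b)
    {H : ℝ → E → E → ℝ}
    (hH : Continuous fun p : ℝ × E × E => H p.1 p.2.1 p.2.2)
    {u : ℝ → E → ℝ}
    (hu : ContinuousOn (fun p : ℝ × E => u p.1 p.2) (Set.Icc a b ×ˢ Set.univ))
    (hvisc : ∀ w : ℝ × E → ℝ, ContDiff ℝ 1 w → ∀ t₀ ∈ Set.Ioo a b, ∀ y₀,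
        IsLocalMin (fun p : ℝ × E => u p.1 p.2 - w p) (t₀, y₀) →
        0 ≤ timeDeriv w t₀ y₀ + H t₀ y₀ (spaceGrad w t₀ y₀))
    {v : ℝ × E → ℝ} (hv : ContDiff ℝ 1 v) (x₀ : E)
    (hmin : IsLocalMin (fun p : ℝ × E => u p.1 p.2 - v p) (b, x₀)) :
    0 ≤ timeDeriv v b x₀ + H b x₀ (spaceGrad v b x₀) := by
  have hH' : Continuous fun p : ℝ × E × E => -H p.1 p.2.1 (-p.2.2) :=
    (hH.comp (continuous_fst.prodMk ((continuous_fst.comp continuous_snd).prodMk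
      (continuous_snd.comp continuous_snd).neg))).neg
  have hu' : ContinuousOn (fun p : ℝ × E => (fun t x => -u t x) p.1 p.2)
      (Set.Icc a b ×ˢ Set.univ) := hu.neg
  have hvisc' : ∀ w : ℝ × E → ℝ, ContDiff ℝ 1 w → ∀ t₀ ∈ Set.Ioo a b, ∀ y₀,
      IsLocalMax (fun p : ℝ × E => (fun t x => -u t x) p.1 p.2 - w p) (t₀, y₀) →
      timeDeriv w t₀ y₀ + (fun t x q => -H t x (-q)) t₀ y₀ (spaceGrad w t₀ y₀) ≤ 0 := by
    intro w hw t₀ ht y₀ hmaxw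
    have hmin' : IsLocalMin (fun p : ℝ × E => u p.1 p.2 - (fun p => -w p) p) (t₀, y₀) := by
      have h0 := hmaxw.neg
      have h1 : (fun p : ℝ × E => -((fun t x => -u t x) p.1 p.2 - w p))
          = fun p : ℝ × E => u p.1 p.2 - (fun p : ℝ × E => -w p) p := by
        funext p
        simp
        ring
      rwa [h1] at h0
    have h0 := hvisc (fun p => -w p) hw.neg t₀ ht y₀ hmin'
    rw [timeDeriv_neg, spaceGrad_neg] at h0
    simp only
    linarith
  have h := keyMax (H := fun t x q => -H t x (-q)) (u := fun t x => -u t x) hab hH' hu' hvisc' hv.neg x₀ (by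
    have h0 := hmin.neg
    have h1 : (fun p : ℝ × E => -(u p.1 p.2 - v p))
        = fun p : ℝ × E => (fun t x => -u t x) p.1 p.2 - (fun p : ℝ × E => -v p) p := by
      funext p
      simp
      ring
    rwa [h1] at h0)
  rw [timeDeriv_neg, spaceGrad_neg] at h
  simp only [neg_neg] at h
  linarith

end Key2

/-- Gluing two viscosity solutions at `t₁` gives a layered viscosity solution on `(0,T)`. -/
theorem stmt0 {n : ℕ} (T t₁ : ℝ) (ht₁ : 0 < t₁) (h1T : t₁ < T)
    (H : ℝ → EuclideanSpace ℝ (Fin n) → EuclideanSpace ℝ (Fin n) → ℝ)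
    (hH : Continuous fun p : ℝ × EuclideanSpace ℝ (Fin n) × EuclideanSpace ℝ (Fin n) =>
      H p.1 p.2.1 p.2.2)
    (σ₁ : EuclideanSpace ℝ (Fin n) → ℝ) (hσ : Continuous σ₁)
    (u : ℝ → EuclideanSpace ℝ (Fin n) → ℝ)
    (hu : ContinuousOn (fun p : ℝ × EuclideanSpace ℝ (Fin n) => u p.1 p.2)
      (Set.Icc 0 T ×ˢ Set.univ))
    (h1 : IsViscositySolution 0 t₁ H σ₁ u)
    (h2 : IsViscositySolution t₁ T H (u t₁) u) :
    IsViscositySolution 0 T H σ₁ u := by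
  refine ⟨hu, h1.2.1, ?_⟩
  intro v hv t₀ ht₀ x₀
  have hu1 : ContinuousOn (fun p : ℝ × EuclideanSpace ℝ (Fin n) => u p.1 p.2)
      (Set.Icc 0 t₁ ×ˢ Set.univ) :=
    hu.mono (Set.prod_mono (Set.Icc_subset_Icc le_rfl h1T.le) le_rfl)
  constructor
  · intro hmax
    rcases lt_trichotomy t₀ t₁ with h | h | h
    · exact (h1.2.2 v hv t₀ ⟨ht₀.1, h⟩ x₀).1 hmax
    · subst h
      exact keyMax ht₁ hH hu1 (fun w hw s hs y hm => (h1.2.2 w hw s hs y).1 hm) hv x₀ hmax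
    · exact (h2.2.2 v hv t₀ ⟨h, ht₀.2⟩ x₀).1 hmax
  · intro hmin
    rcases lt_trichotomy t₀ t₁ with h | h | h
    · exact (h1.2.2 v hv t₀ ⟨ht₀.1, h⟩ x₀).2 hmin
    · subst h
      exact keyMin ht₁ hH hu1 (fun w hw s hs y hm => (h1.2.2 w hw s hs y).2 hm) hv x₀ hmin
    · exact (h2.2.2 v hv t₀ ⟨h, ht₀.2⟩ x₀).2 hmin
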